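/- Fix constants γ, α, λ with 0 < γ < 4/3, 0 < α < √(3/2)·(2 − γ), and λ < −α − 3γ(2−γ)/(2α). Consider the planar vector field F(w, z) = ( (w²/2 − 3)(w + λ) + z²((γ/2)w + α + λ), (1/2)z(w² − αw + γ(z² − 3)) ) and the point C = (2α/(2−γ), √(3(2−γ)² − 2α²)/(2−γ)). Then C is a zero of F, and the Jacobian matrix of F at C has negative trace and positive determinant; hence both of its eigenvalues have negative real part and C is a hyperbolic sink of the planar system. -/

import Mathlib

open Real Polynomial

/-- Both complex roots of `X² - T X + D` with `T < 0 < D` have negative real part. -/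
lemma quad_root_re_neg {T D : ℝ} (hT : T < 0) (hD : 0 < D) (μ : ℂ)
    (h : μ ^ 2 - (T : ℂ) * μ + (D : ℂ) = 0) : μ.re < 0 := by
  have hre : μ.re ^ 2 - μ.im ^ 2 - T * μ.re + D = 0 := by
    have := congrArg Complex.re h
    simpa [pow_two, Complex.mul_re, Complex.mul_im, Complex.ofReal_re, Complex.ofReal_im]
      using this
  have him : μ.im * (2 * μ.re - T) = 0 := by
    have := congrArg Complex.im h
    simp [pow_two, Complex.mul_re, Complex.mul_im] at this
    ring_nf
    ring_nf at this
    linarith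
  rcases mul_eq_zero.mp him with h1 | h1
  · -- real root
    rw [h1] at hre
    by_contra hx
    push_neg at hx
    nlinarith
  · linarith

set_option maxHeartbeats 1600000 in
/-- under the condition `0 < γ < 4/3`, `0 < α < √(3/2)(2-γ)`,
`λ < -α - 3γ(2-γ)/(2α)`, the point `C` is an equilibrium of the normalized system whose
Jacobian matrix has negative trace and positive determinant; hence both eigenvalues
(the complex roots of its characteristic polynomial) have negative real part, so `C`
is a hyperbolic sink. -/
theorem normalized_system_C_is_sink
    (γ α lam : ℝ)
    (hγ0 : 0 < γ) (hγ : γ < 4 / 3)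
    (hα0 : 0 < α) (hα : α < Real.sqrt (3 / 2) * (2 - γ))
    (hlam : lam < -α - 3 * γ * (2 - γ) / (2 * α)) :
    let F1 : ℝ → ℝ → ℝ := fun w z =>
      (w ^ 2 / 2 - 3) * (w + lam) + z ^ 2 * ((γ / 2) * w + α + lam)
    let F2 : ℝ → ℝ → ℝ := fun w z =>
      (1 / 2) * z * (w ^ 2 - α * w + γ * (z ^ 2 - 3))
    let wC : ℝ := 2 * α / (2 - γ)
    let zC : ℝ := Real.sqrt (3 * (2 - γ) ^ 2 - 2 * α ^ 2) / (2 - γ)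
    let J : Matrix (Fin 2) (Fin 2) ℝ :=
      !![deriv (fun w => F1 w zC) wC, deriv (fun z => F1 wC z) zC;
         deriv (fun w => F2 w zC) wC, deriv (fun z => F2 wC z) zC]
    F1 wC zC = 0 ∧ F2 wC zC = 0 ∧
    Matrix.trace J < 0 ∧ 0 < J.det ∧
    ∀ μ : ℂ, (Matrix.charpoly (J.map Complex.ofReal)).IsRoot μ → μ.re < 0 := by
  intro F1 F2 wC zC J
  have h2γ : (0:ℝ) < 2 - γ := by linarith
  -- square the hypothesis on α
  have hα2 : 2 * α ^ 2 < 3 * (2 - γ) ^ 2 := by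
    have hs : Real.sqrt (3/2) ^ 2 = 3/2 := Real.sq_sqrt (by norm_num)
    nlinarith [mul_self_lt_mul_self hα0.le hα, Real.sqrt_nonneg (3/2 : ℝ)]
  have hz0 : (0:ℝ) ≤ 3 * (2 - γ) ^ 2 - 2 * α ^ 2 := by linarith
  have hzpos : 0 < zC := div_pos (Real.sqrt_pos.mpr (by linarith)) h2γ
  have key : (2 - γ) ^ 2 * zC ^ 2 = 3 * (2 - γ) ^ 2 - 2 * α ^ 2 := by
    show (2 - γ) ^ 2 * (Real.sqrt (3 * (2 - γ) ^ 2 - 2 * α ^ 2) / (2 - γ)) ^ 2 = _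
    rw [div_pow, Real.sq_sqrt hz0]
    field_simp
  have hw : (2 - γ) * wC = 2 * α := by
    show (2 - γ) * (2 * α / (2 - γ)) = 2 * α
    field_simp
  clear_value wC zC
  -- algebraic consequences
  have hA : wC ^ 2 / 2 - 3 = -zC ^ 2 := by
    have h1 : ((2 - γ) * wC) ^ 2 = (2 * α) ^ 2 := by rw [hw]
    have h2 : (2 - γ) ^ 2 * (wC ^ 2 / 2 - 3 + zC ^ 2) = 0 := by
      linear_combination h1 / 2 + key
    have h3 := (mul_eq_zero.mp h2).resolve_left (pow_ne_zero 2 (ne_of_gt h2γ))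
    linarith
  have hB : (γ / 2) * wC + α = wC := by
    have h1 : (2 - γ) * ((γ / 2) * wC + α - wC) = (γ/2 - 1) * ((2-γ)*wC - 2*α) := by ring
    rw [hw] at h1
    have := h1
    have h2 : (2 - γ) * ((γ / 2) * wC + α - wC) = 0 := by rw [h1]; ring
    have h3 := (mul_eq_zero.mp h2).resolve_left (ne_of_gt h2γ)
    linarith
  have hC : wC ^ 2 - α * wC + γ * (zC ^ 2 - 3) = 0 := by
    linear_combination γ * hA + (wC / 2) * hw
  -- equilibrium
  have hF1 : F1 wC zC = 0 := by
    show (wC ^ 2 / 2 - 3) * (wC + lam) + zC ^ 2 * ((γ / 2) * wC + α + lam) = 0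
    linear_combination (wC + lam) * hA + zC ^ 2 * hB
  have hF2 : F2 wC zC = 0 := by
    show (1 / 2) * zC * (wC ^ 2 - α * wC + γ * (zC ^ 2 - 3)) = 0
    linear_combination ((1:ℝ)/2) * zC * hC
  -- derivatives
  have ea : deriv (fun w => F1 w zC) wC = wC * (wC + lam) - (1 - γ/2) * zC ^ 2 := by
    have h : HasDerivAt (fun w : ℝ => (w ^ 2 / 2 - 3) * (w + lam) + zC ^ 2 * ((γ / 2) * w + α + lam))
        (wC * (wC + lam) - (1 - γ/2) * zC ^ 2) wC := by
      have h1 : HasDerivAt (fun w : ℝ => w ^ 2 / 2 - 3) wC wC := by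
        simpa using (((hasDerivAt_pow 2 wC).div_const 2).sub_const 3)
      have h2 : HasDerivAt (fun w : ℝ => w + lam) 1 wC := (hasDerivAt_id wC).add_const lam
      have h3 : HasDerivAt (fun w : ℝ => zC ^ 2 * ((γ / 2) * w + α + lam)) (zC ^ 2 * (γ / 2)) wC := by
        simpa using ((((hasDerivAt_id wC).const_mul (γ/2)).add_const α).add_const lam).const_mul (zC ^ 2)
      have := (h1).mul h2 |>.add h3
      refine this.congr_deriv ?_
      linear_combination hA
    exact h.deriv
  have eb : deriv (fun z => F1 wC z) zC = 2 * zC * (wC + lam) := by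
    have h : HasDerivAt (fun z : ℝ => (wC ^ 2 / 2 - 3) * (wC + lam) + z ^ 2 * ((γ / 2) * wC + α + lam))
        (2 * zC * (wC + lam)) zC := by
      have h1 : HasDerivAt (fun z : ℝ => z ^ 2 * ((γ / 2) * wC + α + lam))
          (2 * zC * ((γ / 2) * wC + α + lam)) zC := by
        simpa using (hasDerivAt_pow 2 zC).mul_const ((γ / 2) * wC + α + lam)
      have := (hasDerivAt_const zC ((wC ^ 2 / 2 - 3) * (wC + lam))).add h1
      refine this.congr_deriv ?_
      linear_combination (2 * zC) * hB
    exact h.deriv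
  have ec : deriv (fun w => F2 w zC) wC = (1/2) * zC * (2 * wC - α) := by
    have h : HasDerivAt (fun w : ℝ => (1 / 2) * zC * (w ^ 2 - α * w + γ * (zC ^ 2 - 3)))
        ((1/2) * zC * (2 * wC - α)) wC := by
      have h1 : HasDerivAt (fun w : ℝ => w ^ 2 - α * w + γ * (zC ^ 2 - 3)) (2 * wC - α) wC := by
        simpa using (((hasDerivAt_pow 2 wC).sub ((hasDerivAt_id wC).const_mul α)).add_const
          (γ * (zC ^ 2 - 3)))
      have := h1.const_mul ((1/2) * zC)
      convert this using 1
      try ring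
    exact h.deriv
  have ed : deriv (fun z => F2 wC z) zC = γ * zC ^ 2 := by
    have h : HasDerivAt (fun z : ℝ => (1 / 2) * z * (wC ^ 2 - α * wC + γ * (z ^ 2 - 3)))
        (γ * zC ^ 2) zC := by
      have h1 : HasDerivAt (fun z : ℝ => (1 / 2) * z) (1/2) zC := by
        simpa using (hasDerivAt_id zC).const_mul (1/2 : ℝ)
      have h2 : HasDerivAt (fun z : ℝ => wC ^ 2 - α * wC + γ * (z ^ 2 - 3)) (γ * (2 * zC)) zC := by
        simpa using (((hasDerivAt_pow 2 zC).sub_const 3).const_mul γ).const_add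
          (wC ^ 2 - α * wC)
      have := h1.mul h2
      refine this.congr_deriv ?_
      linear_combination ((1:ℝ)/2) * hC
    exact h.deriv
  -- trace and det
  have hJtr : Matrix.trace J = wC * (wC + lam) - (1 - γ/2) * zC ^ 2 + γ * zC ^ 2 := by
    show Matrix.trace !![deriv (fun w => F1 w zC) wC, deriv (fun z => F1 wC z) zC;
         deriv (fun w => F2 w zC) wC, deriv (fun z => F2 wC z) zC] = _
    rw [Matrix.trace_fin_two]
    simp only [Matrix.of_apply, Matrix.cons_val', Matrix.cons_val_zero, Matrix.cons_val_one,
      Matrix.head_cons, Matrix.empty_val', Matrix.cons_val_fin_one, Matrix.head_fin_const]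
    rw [ea, ed]
  have hJdet : J.det = zC ^ 2 * (-α * (wC + lam) - (γ * (2 - γ) / 2) * zC ^ 2) := by
    show Matrix.det !![deriv (fun w => F1 w zC) wC, deriv (fun z => F1 wC z) zC;
         deriv (fun w => F2 w zC) wC, deriv (fun z => F2 wC z) zC] = _
    rw [Matrix.det_fin_two]
    simp only [Matrix.of_apply, Matrix.cons_val', Matrix.cons_val_zero, Matrix.cons_val_one,
      Matrix.head_cons, Matrix.empty_val', Matrix.cons_val_fin_one, Matrix.head_fin_const]
    rw [ea, eb, ec, ed]
    linear_combination (-(zC ^ 2) * (wC + lam)) * hw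
  -- the key inequality from hlam
  have hlam' : 2 * α * lam < -2 * α ^ 2 - 3 * γ * (2 - γ) := by
    have hD : 2 * α * (3 * γ * (2 - γ) / (2 * α)) = 3 * γ * (2 - γ) := by
      field_simp
    have := mul_lt_mul_of_pos_left hlam (show (0:ℝ) < 2 * α by linarith)
    nlinarith [this, hD]
  have hbound : 2 * α * (2 - γ) * (wC + lam) < 2 * γ * α ^ 2 - 3 * γ * (2 - γ) ^ 2 := by
    have h1 : 2 * α * ((2 - γ) * wC) = 4 * α ^ 2 := by rw [hw]; ring
    have h2 := mul_lt_mul_of_pos_left hlam' h2γ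
    nlinarith [h1, h2]
  -- trace < 0
  have htr : Matrix.trace J < 0 := by
    rw [hJtr]
    have hP : (0:ℝ) < 2 * α * (2 - γ) ^ 2 := by positivity
    have h1eq : 2 * α * (2 - γ) ^ 2 * (wC * (wC + lam)) =
        2 * α * (2 * α * (2 - γ) * (wC + lam)) := by
      linear_combination (2 * α * (wC + lam) * (2 - γ)) * hw
    have h1 := mul_lt_mul_of_pos_left hbound (show (0:ℝ) < 2 * α by linarith)
    have h2 : 2 * α * (2 - γ) ^ 2 * ((- (1 - γ/2) + γ) * zC ^ 2) =
        α * (3 * γ - 2) * (3 * (2 - γ) ^ 2 - 2 * α ^ 2) := by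
      linear_combination (α * (3 * γ - 2)) * key
    have hneg : α * (2 - γ) * (2 * α ^ 2 - 3 * (2 - γ) ^ 2) < 0 :=
      mul_neg_of_pos_of_neg (by positivity) (by linarith)
    nlinarith [h1eq, h1, h2, hneg, hP]
  -- det > 0
  have hkq : γ * ((2 - γ) ^ 2 * zC ^ 2) = γ * (3 * (2 - γ) ^ 2 - 2 * α ^ 2) := by rw [key]
  have hbr : 0 < -α * (wC + lam) - (γ * (2 - γ) / 2) * zC ^ 2 := by
    have h1 : 0 < 2 * (2 - γ) * (-α * (wC + lam) - (γ * (2 - γ) / 2) * zC ^ 2) := by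
      nlinarith [hbound, hkq]
    nlinarith [h1, h2γ]
  have hdet : 0 < J.det := by
    rw [hJdet]
    exact mul_pos (by positivity) hbr
  refine ⟨hF1, hF2, htr, hdet, ?_⟩
  -- eigenvalues
  intro μ hμ
  set T : ℝ := wC * (wC + lam) - (1 - γ/2) * zC ^ 2 + γ * zC ^ 2 with hTdef
  set D : ℝ := zC ^ 2 * (-α * (wC + lam) - (γ * (2 - γ) / 2) * zC ^ 2) with hDdef
  have hT : T < 0 := hJtr ▸ htr
  have hD : 0 < D := hJdet ▸ hdet
  have h0 : Polynomial.eval μ ((J.map Complex.ofReal).charpoly) = 0 := hμ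
  rw [Matrix.charpoly, Matrix.det_fin_two] at h0
  rw [Matrix.charmatrix_apply_eq, Matrix.charmatrix_apply_eq,
    Matrix.charmatrix_apply_ne _ _ _ (by decide), Matrix.charmatrix_apply_ne _ _ _ (by decide)] at h0
  simp only [Matrix.map_apply, Polynomial.eval_sub, Polynomial.eval_mul, Polynomial.eval_neg,
    Polynomial.eval_X, Polynomial.eval_C] at h0
  have hJ00 : J 0 0 = deriv (fun w => F1 w zC) wC := rfl
  have hJ01 : J 0 1 = deriv (fun z => F1 wC z) zC := rfl
  have hJ10 : J 1 0 = deriv (fun w => F2 w zC) wC := rfl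
  have hJ11 : J 1 1 = deriv (fun z => F2 wC z) zC := rfl
  rw [hJ00, hJ01, hJ10, hJ11, ea, eb, ec, ed] at h0
  have hquad : μ ^ 2 - (T : ℂ) * μ + (D : ℂ) = 0 := by
    have hwc : ((2:ℂ) - (γ:ℂ)) * (wC:ℂ) = 2 * (α:ℂ) := by exact_mod_cast congrArg (Complex.ofReal) hw
    rw [hTdef, hDdef]
    push_cast at h0 ⊢
    linear_combination h0 + ((zC:ℂ) ^ 2 * ((wC:ℂ) + (lam:ℂ))) * hwc
  exact quad_root_re_neg hT hD μ hquad
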